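/- Let (V; M0,...,M4; c) be a Higmanian matrix configuration with valencies ni = c(i,i,0), fix i ∈ {3,4}, and for j ∈ {1,2,3,4} set c_j = c(2,2,j) + 2·c(2,i,j) + c(i,i,j) (the number of common neighbours, in the graph with adjacency matrix M2+Mi, of a pair of vertices in relation Mj). Then: (a) the conjunction (c_1 = c_2 and c_3 = c_4) holds if and only if c(3,3,3) = c(3,3,4) and 1/n3 + 1/n4 = 1/n1 − 1/(n1+1) (equality of rationals); (b) the conjunction (c_2 = c_3 and c_3 = c_4) holds if and only if c(3,3,3) = c(3,3,4) and n2/(n1+1) − 2·ni/n_{7−i} = 1 (equality of rationals). -/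
import Mathlib


open Matrix Finset

/-- A *Higmanian matrix configuration* on a nonempty finite set `V`:
five nonzero symmetric `{0,1}`-matrices `M 0, …, M 4` over `ℤ` summing to the all-ones
matrix, with `M 0 = I`, structure constants `c`, parabolic conditions for
`N0 = M0 + M1` and `N1 = M0 + M1 + M2`, standard ordering `n3 ≤ n4`, and triviality of
the radicals of `M 3` and `M 4`. -/
structure HigmanianConfig (V : Type*) [Fintype V] [DecidableEq V] : Type _ where
  nonempty : Nonempty V
  M : Fin 5 → Matrix V V ℤ
  c : Fin 5 → Fin 5 → Fin 5 → ℕ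
  M_ne_zero : ∀ i, M i ≠ 0
  M_symm : ∀ i, (M i)ᵀ = M i
  M_entries : ∀ i x y, M i x y = 0 ∨ M i x y = 1
  M_zero : M 0 = 1
  sum_M : M 0 + M 1 + M 2 + M 3 + M 4 = Matrix.of fun _ _ => 1
  mul_M : ∀ i j, M i * M j = ∑ k : Fin 5, (c i j k : ℤ) • M k
  N0_sq : (M 0 + M 1) * (M 0 + M 1) = ((1 + c 1 1 0 : ℕ) : ℤ) • (M 0 + M 1)
  N1_sq : (M 0 + M 1 + M 2) * (M 0 + M 1 + M 2)
      = ((1 + c 1 1 0 + c 2 2 0 : ℕ) : ℤ) • (M 0 + M 1 + M 2)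
  N1_ne_J : M 0 + M 1 + M 2 ≠ Matrix.of fun _ _ => 1
  n3_le_n4 : c 3 3 0 ≤ c 4 4 0
  radical : ∀ j ∈ ({3, 4} : Finset (Fin 5)), ∀ T : Finset (Fin 5),
    T.Nonempty → T ⊆ ({1, 2, 3, 4} : Finset (Fin 5)) →
    ¬ ((1 + ∑ t ∈ T, M t) * (1 + ∑ t ∈ T, M t)
          = (1 + ∑ t ∈ T, (c t t 0 : ℤ)) • (1 + ∑ t ∈ T, M t)
        ∧ (1 + ∑ t ∈ T, M t) * M j = (1 + ∑ t ∈ T, (c t t 0 : ℤ)) • M j)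

/-- The valency `nᵢ = c i i 0` of the `i`-th basis matrix. -/
def HigmanianConfig.n {V : Type*} [Fintype V] [DecidableEq V]
    (X : HigmanianConfig V) (i : Fin 5) : ℕ := X.c i i 0

namespace HigmanianConfig

variable {V : Type*} [Fintype V] [DecidableEq V] (X : HigmanianConfig V)

lemma entry_nonneg (i : Fin 5) (x y : V) : 0 ≤ X.M i x y := by
  rcases X.M_entries i x y with h | h <;> simp [h]

lemma entry_sum' (x y : V) : ∑ j : Fin 5, X.M j x y = 1 := by
  have := congrFun (congrFun X.sum_M x) y
  rw [Fin.sum_univ_five]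
  simpa using this

lemma entry_disj {l k : Fin 5} (h : l ≠ k) (x y : V) :
    X.M l x y = 0 ∨ X.M k x y = 0 := by
  by_contra hc
  push_neg at hc
  have hl : X.M l x y = 1 := (X.M_entries l x y).resolve_left hc.1
  have hk : X.M k x y = 1 := (X.M_entries k x y).resolve_left hc.2
  have hsub : ({l, k} : Finset (Fin 5)) ⊆ univ := subset_univ _
  have hle := Finset.sum_le_sum_of_subset_of_nonneg hsub
    (fun j _ _ => X.entry_nonneg j x y)
  rw [Finset.sum_pair h, X.entry_sum' x y, hl, hk] at hle
  omega

lemma oneEntry (k : Fin 5) : ∃ x y, X.M k x y = 1 ∧ ∀ j, j ≠ k → X.M j x y = 0 := by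
  have h1 : ¬ ∀ x y, X.M k x y = 0 := by
    intro h
    exact X.M_ne_zero k (by ext x y; simp [h x y])
  push_neg at h1
  obtain ⟨x, y, hxy⟩ := h1
  refine ⟨x, y, (X.M_entries k x y).resolve_left hxy, fun j hj => ?_⟩
  exact (X.entry_disj hj x y).resolve_right
    (by rw [(X.M_entries k x y).resolve_left hxy]; exact one_ne_zero)

lemma linF (a b : Fin 5 → ℤ) (h : ∑ j : Fin 5, a j • X.M j = ∑ j : Fin 5, b j • X.M j)
    (k : Fin 5) : a k = b k := by
  obtain ⟨x, y, h1, h0⟩ := X.oneEntry k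
  have he := congrFun (congrFun h x) y
  simp only [Matrix.sum_apply, Matrix.smul_apply, smul_eq_mul] at he
  rw [Finset.sum_eq_single k (fun j _ hj => by rw [h0 j hj, mul_zero])
      (fun hk => absurd (mem_univ k) hk),
    Finset.sum_eq_single k (fun j _ hj => by rw [h0 j hj, mul_zero])
      (fun hk => absurd (mem_univ k) hk), h1, mul_one, mul_one] at he
  exact he

lemma symm_apply (i : Fin 5) (x y : V) : X.M i y x = X.M i x y := by
  conv_lhs => rw [← X.M_symm i]
  rfl

lemma diag_eq (x : V) {l : Fin 5} (hl : l ≠ 0) : X.M l x x = 0 := by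
  refine (X.entry_disj hl x x).resolve_right ?_
  rw [X.M_zero]
  simp

lemma rowsum (i : Fin 5) (x : V) : ∑ y, X.M i x y = (X.n i : ℤ) := by
  have h := congrFun (congrFun (X.mul_M i i) x) x
  rw [Matrix.mul_apply] at h
  simp only [Matrix.sum_apply, Matrix.smul_apply, smul_eq_mul] at h
  have hl : ∀ y, X.M i x y * X.M i y x = X.M i x y := by
    intro y
    rw [X.symm_apply i x y]
    rcases X.M_entries i x y with h' | h' <;> rw [h'] <;> ring
  rw [Finset.sum_congr rfl (fun y _ => hl y)] at h
  have hr : ∀ l : Fin 5, (X.c i i l : ℤ) * X.M l x x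
      = if l = 0 then (X.c i i 0 : ℤ) else 0 := by
    intro l
    by_cases h0 : l = 0
    · subst h0; rw [X.M_zero]; simp
    · rw [X.diag_eq x h0, mul_zero, if_neg h0]
  rw [Finset.sum_congr rfl (fun l _ => hr l), Finset.sum_ite_eq' univ (0 : Fin 5)] at h
  simpa [HigmanianConfig.n] using h

lemma n_pos (i : Fin 5) : 1 ≤ X.n i := by
  obtain ⟨x, y, h1, _⟩ := X.oneEntry i
  have h := X.rowsum i x
  by_contra hn
  have : X.n i = 0 := by omega
  rw [this] at h
  have : ∀ y' ∈ univ, X.M i x y' = 0 := by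
    intro y' _
    have hnn := X.entry_nonneg i x y'
    by_contra hne
    have h1' : X.M i x y' = 1 := (X.M_entries i x y').resolve_left hne
    have hsub : ({y'} : Finset V) ⊆ univ := subset_univ _
    have hle := Finset.sum_le_sum_of_subset_of_nonneg hsub
      (fun j _ _ => X.entry_nonneg i x j)
    rw [Finset.sum_singleton, h1', h] at hle
    omega
  rw [Finset.sum_congr rfl this] at h
  simp at h
  rw [this y (mem_univ y)] at h1
  omega

/-- `∑ l, c i j l * n l = n i * n j`. -/
lemma sum_c (i j : Fin 5) :
    ∑ l : Fin 5, (X.c i j l : ℤ) * (X.n l : ℤ) = (X.n i : ℤ) * (X.n j : ℤ) := by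
  obtain ⟨x⟩ := X.nonempty
  have h1 : ∑ y, (X.M i * X.M j) x y = (X.n i : ℤ) * (X.n j : ℤ) := by
    calc ∑ y, (X.M i * X.M j) x y = ∑ y, ∑ z, X.M i x z * X.M j z y :=
          Finset.sum_congr rfl fun y _ => Matrix.mul_apply
      _ = ∑ z, ∑ y, X.M i x z * X.M j z y := Finset.sum_comm
      _ = ∑ z, X.M i x z * (X.n j : ℤ) := by
          refine Finset.sum_congr rfl fun z _ => ?_
          rw [← Finset.mul_sum, X.rowsum j z]
      _ = (X.n i : ℤ) * (X.n j : ℤ) := by rw [← Finset.sum_mul, X.rowsum i x]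
  have h2 : ∑ y, (X.M i * X.M j) x y = ∑ l : Fin 5, (X.c i j l : ℤ) * (X.n l : ℤ) := by
    rw [X.mul_M i j]
    calc ∑ y, (∑ l : Fin 5, (X.c i j l : ℤ) • X.M l) x y
        = ∑ y, ∑ l : Fin 5, (X.c i j l : ℤ) * X.M l x y := by
          refine Finset.sum_congr rfl fun y _ => ?_
          simp only [Matrix.sum_apply, Matrix.smul_apply, smul_eq_mul]
      _ = ∑ l : Fin 5, ∑ y, (X.c i j l : ℤ) * X.M l x y := Finset.sum_comm
      _ = ∑ l : Fin 5, (X.c i j l : ℤ) * (X.n l : ℤ) := by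
          refine Finset.sum_congr rfl fun l _ => ?_
          rw [← Finset.mul_sum, X.rowsum l x]
  rw [← h2, h1]

lemma trace_pair (l k : Fin 5) :
    Matrix.trace (X.M l * X.M k)
      = if l = k then (Fintype.card V : ℤ) * (X.n k : ℤ) else 0 := by
  rw [Matrix.trace]
  simp only [Matrix.diag, Matrix.mul_apply]
  by_cases h : l = k
  · subst h
    rw [if_pos rfl]
    have : ∀ x ∈ univ, ∑ y, X.M l x y * X.M l y x = (X.n l : ℤ) := by
      intro x _
      have he : ∀ y ∈ univ, X.M l x y * X.M l y x = X.M l x y := by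
        intro y _
        rw [X.symm_apply l x y]
        rcases X.M_entries l x y with h' | h' <;> rw [h'] <;> ring
      rw [Finset.sum_congr rfl he, X.rowsum l x]
    rw [Finset.sum_congr rfl this, Finset.sum_const, Finset.card_univ]
    simp [mul_comm]
  · rw [if_neg h]
    have : ∀ x ∈ univ, ∑ y, X.M l x y * X.M k y x = 0 := by
      intro x _
      refine Finset.sum_eq_zero fun y _ => ?_
      rw [X.symm_apply k x y]
      rcases X.entry_disj h x y with h' | h' <;> rw [h'] <;> ring
    rw [Finset.sum_congr rfl this]
    simp

lemma trace_triple (i j k : Fin 5) :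
    Matrix.trace (X.M i * X.M j * X.M k)
      = (Fintype.card V : ℤ) * ((X.n k : ℤ) * (X.c i j k : ℤ)) := by
  rw [X.mul_M i j, Finset.sum_mul, Matrix.trace_sum]
  have : ∀ l ∈ univ, Matrix.trace ((X.c i j l : ℤ) • X.M l * X.M k)
      = if l = k then (X.c i j l : ℤ) * ((Fintype.card V : ℤ) * (X.n k : ℤ)) else 0 := by
    intro l _
    rw [Matrix.smul_mul, Matrix.trace_smul, X.trace_pair l k]
    by_cases h : l = k <;> simp [h]
  rw [Finset.sum_congr rfl this, Finset.sum_ite_eq' univ (k : Fin 5)]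
  simp
  ring

lemma card_pos' (X : HigmanianConfig V) : 0 < (Fintype.card V : ℤ) := by
  have : Nonempty V := X.nonempty
  exact_mod_cast Fintype.card_pos

/-- cyclic symmetry: `n k * c i j k = n i * c j k i` -/
lemma cyc (i j k : Fin 5) :
    (X.n k : ℤ) * (X.c i j k : ℤ) = (X.n i : ℤ) * (X.c j k i : ℤ) := by
  have h : Matrix.trace (X.M i * X.M j * X.M k)
      = Matrix.trace (X.M j * X.M k * X.M i) := by
    rw [mul_assoc]
    exact Matrix.trace_mul_comm _ _
  rw [X.trace_triple, X.trace_triple] at h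
  exact mul_left_cancel₀ (ne_of_gt X.card_pos') h

lemma comm_M (i j : Fin 5) : X.M i * X.M j = X.M j * X.M i := by
  have h : (X.M i * X.M j)ᵀ = X.M i * X.M j := by
    rw [X.mul_M i j]
    rw [Matrix.transpose_sum]
    exact Finset.sum_congr rfl fun l _ => by rw [Matrix.transpose_smul, X.M_symm]
  conv_lhs => rw [← h]
  rw [Matrix.transpose_mul, X.M_symm, X.M_symm]

lemma comm_c (i j k : Fin 5) : X.c i j k = X.c j i k := by
  have h := X.comm_M i j
  rw [X.mul_M i j, X.mul_M j i] at h
  have := X.linF _ _ h k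
  exact_mod_cast this

/-- associativity relation for structure constants -/
lemma assoc_c (i j k m : Fin 5) :
    ∑ l : Fin 5, (X.c i j l : ℤ) * (X.c l k m : ℤ)
      = ∑ l : Fin 5, (X.c j k l : ℤ) * (X.c i l m : ℤ) := by
  have lhs : (X.M i * X.M j) * X.M k
      = ∑ m' : Fin 5, (∑ l : Fin 5, (X.c i j l : ℤ) * (X.c l k m' : ℤ)) • X.M m' := by
    rw [X.mul_M i j, Finset.sum_mul]
    have : ∀ l ∈ (univ : Finset (Fin 5)), (X.c i j l : ℤ) • X.M l * X.M k
        = ∑ m' : Fin 5, ((X.c i j l : ℤ) * (X.c l k m' : ℤ)) • X.M m' := by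
      intro l _
      rw [Matrix.smul_mul, X.mul_M l k, Finset.smul_sum]
      exact Finset.sum_congr rfl fun m' _ => by rw [smul_smul]
    rw [Finset.sum_congr rfl this, Finset.sum_comm]
    exact Finset.sum_congr rfl fun m' _ => (Finset.sum_smul).symm
  have rhs : X.M i * (X.M j * X.M k)
      = ∑ m' : Fin 5, (∑ l : Fin 5, (X.c j k l : ℤ) * (X.c i l m' : ℤ)) • X.M m' := by
    rw [X.mul_M j k, Finset.mul_sum]
    have : ∀ l ∈ (univ : Finset (Fin 5)), X.M i * ((X.c j k l : ℤ) • X.M l)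
        = ∑ m' : Fin 5, ((X.c j k l : ℤ) * (X.c i l m' : ℤ)) • X.M m' := by
      intro l _
      rw [Matrix.mul_smul, X.mul_M i l, Finset.smul_sum]
      exact Finset.sum_congr rfl fun m' _ => by rw [smul_smul]
    rw [Finset.sum_congr rfl this, Finset.sum_comm]
    exact Finset.sum_congr rfl fun m' _ => (Finset.sum_smul).symm
  exact X.linF _ _ ((lhs.symm.trans (mul_assoc _ _ _)).trans rhs) m

/-- `c 0 j k = δ j k` -/
lemma c_id_left (j k : Fin 5) : (X.c 0 j k : ℤ) = if j = k then 1 else 0 := by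
  refine X.linF (fun k => (X.c 0 j k : ℤ)) (fun k => if j = k then 1 else 0) ?_ k
  rw [← X.mul_M 0 j, X.M_zero, one_mul]
  simp [ite_smul, Finset.sum_ite_eq]

lemma c_id_right (j k : Fin 5) : (X.c j 0 k : ℤ) = if j = k then 1 else 0 := by
  rw [show X.c j 0 k = X.c 0 j k from X.comm_c j 0 k]
  exact X.c_id_left j k

lemma n_cast (i : Fin 5) : (X.c i i 0 : ℤ) = (X.n i : ℤ) := rfl

/-- extraction from `N0_sq` at coordinate `k` -/
lemma N0_coeff (k : Fin 5) :
    (X.c 0 0 k : ℤ) + X.c 0 1 k + (X.c 1 0 k + X.c 1 1 k)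
      = (1 + (X.c 1 1 0 : ℤ)) * ((if (0:Fin 5) = k then 1 else 0) + (if (1:Fin 5) = k then 1 else 0)) := by
  have h := X.N0_sq
  rw [add_mul, mul_add, mul_add, X.mul_M 0 0, X.mul_M 0 1, X.mul_M 1 0, X.mul_M 1 1] at h
  obtain ⟨x, y, h1, h0⟩ := X.oneEntry k
  have he := congrFun (congrFun h x) y
  simp only [Matrix.add_apply, Matrix.smul_apply, Matrix.sum_apply, smul_eq_mul] at he
  rw [Finset.sum_eq_single k (fun j _ hj => by rw [h0 j hj, mul_zero]) (fun hk => absurd (mem_univ k) hk),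
    Finset.sum_eq_single k (fun j _ hj => by rw [h0 j hj, mul_zero]) (fun hk => absurd (mem_univ k) hk),
    Finset.sum_eq_single k (fun j _ hj => by rw [h0 j hj, mul_zero]) (fun hk => absurd (mem_univ k) hk),
    Finset.sum_eq_single k (fun j _ hj => by rw [h0 j hj, mul_zero]) (fun hk => absurd (mem_univ k) hk),
    h1] at he
  have e0 : X.M 0 x y = if (0:Fin 5) = k then 1 else 0 := by
    by_cases hk : (0:Fin 5) = k
    · rw [if_pos hk, hk, h1]
    · rw [if_neg hk, h0 0 hk]
  have e1 : X.M 1 x y = if (1:Fin 5) = k then 1 else 0 := by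
    by_cases hk : (1:Fin 5) = k
    · rw [if_pos hk, hk, h1]
    · rw [if_neg hk, h0 1 hk]
  rw [e0, e1] at he
  push_cast at he ⊢
  linarith

/-- extraction from `N1_sq` at coordinate `k` -/
lemma N1_coeff (k : Fin 5) :
    (X.c 0 0 k : ℤ) + X.c 0 1 k + X.c 0 2 k + (X.c 1 0 k + X.c 1 1 k + X.c 1 2 k)
        + (X.c 2 0 k + X.c 2 1 k + X.c 2 2 k)
      = (1 + (X.c 1 1 0 : ℤ) + X.c 2 2 0)
          * ((if (0:Fin 5) = k then 1 else 0) + (if (1:Fin 5) = k then 1 else 0)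
            + (if (2:Fin 5) = k then 1 else 0)) := by
  have h := X.N1_sq
  rw [add_mul, add_mul, mul_add, mul_add, mul_add, mul_add, mul_add, mul_add,
    X.mul_M 0 0, X.mul_M 0 1, X.mul_M 0 2, X.mul_M 1 0, X.mul_M 1 1, X.mul_M 1 2,
    X.mul_M 2 0, X.mul_M 2 1, X.mul_M 2 2] at h
  obtain ⟨x, y, h1, h0⟩ := X.oneEntry k
  have he := congrFun (congrFun h x) y
  simp only [Matrix.add_apply, Matrix.smul_apply, Matrix.sum_apply, smul_eq_mul] at he
  rw [Finset.sum_eq_single k (fun j _ hj => by rw [h0 j hj, mul_zero]) (fun hk => absurd (mem_univ k) hk),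
    Finset.sum_eq_single k (fun j _ hj => by rw [h0 j hj, mul_zero]) (fun hk => absurd (mem_univ k) hk),
    Finset.sum_eq_single k (fun j _ hj => by rw [h0 j hj, mul_zero]) (fun hk => absurd (mem_univ k) hk),
    Finset.sum_eq_single k (fun j _ hj => by rw [h0 j hj, mul_zero]) (fun hk => absurd (mem_univ k) hk),
    Finset.sum_eq_single k (fun j _ hj => by rw [h0 j hj, mul_zero]) (fun hk => absurd (mem_univ k) hk),
    Finset.sum_eq_single k (fun j _ hj => by rw [h0 j hj, mul_zero]) (fun hk => absurd (mem_univ k) hk),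
    Finset.sum_eq_single k (fun j _ hj => by rw [h0 j hj, mul_zero]) (fun hk => absurd (mem_univ k) hk),
    Finset.sum_eq_single k (fun j _ hj => by rw [h0 j hj, mul_zero]) (fun hk => absurd (mem_univ k) hk),
    Finset.sum_eq_single k (fun j _ hj => by rw [h0 j hj, mul_zero]) (fun hk => absurd (mem_univ k) hk),
    h1] at he
  have e0 : X.M 0 x y = if (0:Fin 5) = k then 1 else 0 := by
    by_cases hk : (0:Fin 5) = k
    · rw [if_pos hk, hk, h1]
    · rw [if_neg hk, h0 0 hk]
  have e1 : X.M 1 x y = if (1:Fin 5) = k then 1 else 0 := by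
    by_cases hk : (1:Fin 5) = k
    · rw [if_pos hk, hk, h1]
    · rw [if_neg hk, h0 1 hk]
  have e2 : X.M 2 x y = if (2:Fin 5) = k then 1 else 0 := by
    by_cases hk : (2:Fin 5) = k
    · rw [if_pos hk, hk, h1]
    · rw [if_neg hk, h0 2 hk]
  rw [e0, e1, e2] at he
  push_cast at he ⊢
  linarith

lemma c_id_left' {j k : Fin 5} (h : j ≠ k) : (X.c 0 j k : ℤ) = 0 := by
  rw [X.c_id_left, if_neg h]

lemma c_id_left1 (j : Fin 5) : (X.c 0 j j : ℤ) = 1 := by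
  rw [X.c_id_left, if_pos rfl]

lemma c_id_right' {j k : Fin 5} (h : j ≠ k) : (X.c j 0 k : ℤ) = 0 := by
  rw [X.c_id_right, if_neg h]

lemma c_id_right1 (j : Fin 5) : (X.c j j 0 : ℤ) = (X.n j : ℤ) := rfl

lemma nz_pos (i : Fin 5) : (0:ℤ) < (X.n i : ℤ) := by exact_mod_cast X.n_pos i

lemma n0_one : (X.n 0 : ℤ) = 1 := X.c_id_left1 0

lemma commz (i j k : Fin 5) : (X.c i j k : ℤ) = (X.c j i k : ℤ) := by
  exact_mod_cast X.comm_c i j k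

lemma c_id_right1' (j : Fin 5) : (X.c j 0 j : ℤ) = 1 := by
  rw [X.c_id_right, if_pos rfl]

lemma c111 : (X.c 1 1 1 : ℤ) = (X.n 1 : ℤ) - 1 := by
  have h := X.N0_coeff 1
  rw [X.c_id_left' (show (0:Fin 5) ≠ 1 by decide), X.c_id_left1 1, X.c_id_right1' 1,
    if_neg (by decide), if_pos rfl] at h
  have : (X.c 1 1 0 : ℤ) = (X.n 1 : ℤ) := X.n_cast 1
  linarith

lemma c112 : (X.c 1 1 2 : ℤ) = 0 := by
  have h := X.N0_coeff 2
  rw [X.c_id_left' (show (0:Fin 5) ≠ 2 by decide),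
    X.c_id_left' (show (1:Fin 5) ≠ 2 by decide),
    X.c_id_right' (show (1:Fin 5) ≠ 2 by decide),
    if_neg (by decide), if_neg (by decide)] at h
  linarith

lemma c113 : (X.c 1 1 3 : ℤ) = 0 := by
  have h := X.N0_coeff 3
  rw [X.c_id_left' (show (0:Fin 5) ≠ 3 by decide),
    X.c_id_left' (show (1:Fin 5) ≠ 3 by decide),
    X.c_id_right' (show (1:Fin 5) ≠ 3 by decide),
    if_neg (by decide), if_neg (by decide)] at h
  linarith

lemma c114 : (X.c 1 1 4 : ℤ) = 0 := by
  have h := X.N0_coeff 4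
  rw [X.c_id_left' (show (0:Fin 5) ≠ 4 by decide),
    X.c_id_left' (show (1:Fin 5) ≠ 4 by decide),
    X.c_id_right' (show (1:Fin 5) ≠ 4 by decide),
    if_neg (by decide), if_neg (by decide)] at h
  linarith

lemma c120 : (X.c 1 2 0 : ℤ) = 0 := by
  have h := X.cyc 1 2 0
  rw [X.c_id_right' (show (2:Fin 5) ≠ 1 by decide), X.n0_one, mul_zero, one_mul] at h
  exact h

lemma c121 : (X.c 1 2 1 : ℤ) = 0 := by
  have h := X.cyc 2 1 1
  rw [X.c112, mul_zero] at h
  rw [X.commz 1 2 1]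
  exact (mul_eq_zero.mp h).resolve_left (ne_of_gt (X.nz_pos 1))

lemma c221 : (X.c 2 2 1 : ℤ) = (X.n 2 : ℤ) := by
  have h := X.N1_coeff 1
  rw [X.c_id_left' (show (0:Fin 5) ≠ 1 by decide), X.c_id_left1 1,
    X.c_id_left' (show (2:Fin 5) ≠ 1 by decide), X.c_id_right1' 1, X.c111, X.c121,
    X.c_id_right' (show (2:Fin 5) ≠ 1 by decide),
    show (X.c 2 1 1 : ℤ) = 0 from (X.commz 2 1 1).trans X.c121,
    if_neg (by decide), if_pos rfl, if_neg (by decide)] at h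
  have h0 : (X.c 1 1 0 : ℤ) = (X.n 1 : ℤ) := X.n_cast 1
  have h0' : (X.c 2 2 0 : ℤ) = (X.n 2 : ℤ) := X.n_cast 2
  linarith

lemma c123 : (X.c 1 2 3 : ℤ) = 0 := by
  have h := X.N1_coeff 3
  rw [X.c_id_left' (show (0:Fin 5) ≠ 3 by decide),
    X.c_id_left' (show (1:Fin 5) ≠ 3 by decide),
    X.c_id_left' (show (2:Fin 5) ≠ 3 by decide),
    X.c_id_right' (show (1:Fin 5) ≠ 3 by decide),
    X.c_id_right' (show (2:Fin 5) ≠ 3 by decide), X.c113,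
    show (X.c 2 1 3 : ℤ) = (X.c 1 2 3 : ℤ) from (X.commz 2 1 3),
    if_neg (by decide), if_neg (by decide), if_neg (by decide)] at h
  omega

lemma c223 : (X.c 2 2 3 : ℤ) = 0 := by
  have h := X.N1_coeff 3
  rw [X.c_id_left' (show (0:Fin 5) ≠ 3 by decide),
    X.c_id_left' (show (1:Fin 5) ≠ 3 by decide),
    X.c_id_left' (show (2:Fin 5) ≠ 3 by decide),
    X.c_id_right' (show (1:Fin 5) ≠ 3 by decide),
    X.c_id_right' (show (2:Fin 5) ≠ 3 by decide), X.c113,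
    show (X.c 2 1 3 : ℤ) = (X.c 1 2 3 : ℤ) from (X.commz 2 1 3),
    if_neg (by decide), if_neg (by decide), if_neg (by decide)] at h
  omega

lemma c124 : (X.c 1 2 4 : ℤ) = 0 := by
  have h := X.N1_coeff 4
  rw [X.c_id_left' (show (0:Fin 5) ≠ 4 by decide),
    X.c_id_left' (show (1:Fin 5) ≠ 4 by decide),
    X.c_id_left' (show (2:Fin 5) ≠ 4 by decide),
    X.c_id_right' (show (1:Fin 5) ≠ 4 by decide),
    X.c_id_right' (show (2:Fin 5) ≠ 4 by decide), X.c114,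
    show (X.c 2 1 4 : ℤ) = (X.c 1 2 4 : ℤ) from (X.commz 2 1 4),
    if_neg (by decide), if_neg (by decide), if_neg (by decide)] at h
  omega

lemma c224 : (X.c 2 2 4 : ℤ) = 0 := by
  have h := X.N1_coeff 4
  rw [X.c_id_left' (show (0:Fin 5) ≠ 4 by decide),
    X.c_id_left' (show (1:Fin 5) ≠ 4 by decide),
    X.c_id_left' (show (2:Fin 5) ≠ 4 by decide),
    X.c_id_right' (show (1:Fin 5) ≠ 4 by decide),
    X.c_id_right' (show (2:Fin 5) ≠ 4 by decide), X.c114,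
    show (X.c 2 1 4 : ℤ) = (X.c 1 2 4 : ℤ) from (X.commz 2 1 4),
    if_neg (by decide), if_neg (by decide), if_neg (by decide)] at h
  omega

lemma h22sum : 2 * (X.c 1 2 2 : ℤ) + (X.c 2 2 2 : ℤ) = (X.n 1 : ℤ) + (X.n 2 : ℤ) - 1 := by
  have h := X.N1_coeff 2
  rw [X.c_id_left' (show (0:Fin 5) ≠ 2 by decide),
    X.c_id_left' (show (1:Fin 5) ≠ 2 by decide), X.c_id_left1 2,
    X.c_id_right' (show (1:Fin 5) ≠ 2 by decide), X.c_id_right1' 2, X.c112,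
    show (X.c 2 1 2 : ℤ) = (X.c 1 2 2 : ℤ) from (X.commz 2 1 2),
    if_neg (by decide), if_neg (by decide), if_pos rfl] at h
  have h0 : (X.c 1 1 0 : ℤ) = (X.n 1 : ℤ) := X.n_cast 1
  have h0' : (X.c 2 2 0 : ℤ) = (X.n 2 : ℤ) := X.n_cast 2
  linarith

lemma c122 : (X.c 1 2 2 : ℤ) = (X.n 1 : ℤ) := by
  have h := X.assoc_c 1 1 2 2
  rw [Fin.sum_univ_five, Fin.sum_univ_five] at h
  rw [show (X.c 1 1 0 : ℤ) = (X.n 1 : ℤ) from X.n_cast 1, X.c111, X.c112, X.c113, X.c114,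
    X.c_id_left1 2, X.c120, X.c121, X.c123, X.c124,
    X.c_id_right' (show (1:Fin 5) ≠ 2 by decide)] at h
  have hq : ((X.c 1 2 2 : ℤ) + 1) * ((X.c 1 2 2 : ℤ) - (X.n 1 : ℤ)) = 0 := by
    linear_combination -h
  rcases mul_eq_zero.mp hq with h' | h'
  · have : (0:ℤ) ≤ (X.c 1 2 2 : ℤ) := Int.natCast_nonneg _
    linarith
  · linarith

lemma c222 : (X.c 2 2 2 : ℤ) = (X.n 2 : ℤ) - (X.n 1 : ℤ) - 1 := by
  have := X.h22sum
  have := X.c122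
  linarith

lemma cancel_n {i : Fin 5} {x : ℤ} (h : (X.n i : ℤ) * x = 0) : x = 0 :=
  (mul_eq_zero.mp h).resolve_left (ne_of_gt (X.nz_pos i))

lemma c130 : (X.c 1 3 0 : ℤ) = 0 := by
  have h := X.cyc 1 3 0
  rw [X.c_id_right' (show (3:Fin 5) ≠ 1 by decide), X.n0_one, mul_zero, one_mul] at h
  exact h

lemma c131 : (X.c 1 3 1 : ℤ) = 0 := by
  have h1 := X.cyc 3 1 1
  rw [X.c113, mul_zero] at h1
  have h311 : (X.c 3 1 1 : ℤ) = 0 := X.cancel_n h1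
  have h := X.cyc 1 3 1
  rw [h311, mul_zero] at h
  exact X.cancel_n h

lemma c132 : (X.c 1 3 2 : ℤ) = 0 := by
  have h1 := X.cyc 3 2 1
  rw [show (X.c 2 1 3 : ℤ) = (X.c 1 2 3 : ℤ) from X.commz 2 1 3, X.c123, mul_zero] at h1
  have h321 : (X.c 3 2 1 : ℤ) = 0 := X.cancel_n h1
  have h := X.cyc 1 3 2
  rw [h321, mul_zero] at h
  exact X.cancel_n h

lemma c140 : (X.c 1 4 0 : ℤ) = 0 := by
  have h := X.cyc 1 4 0
  rw [X.c_id_right' (show (4:Fin 5) ≠ 1 by decide), X.n0_one, mul_zero, one_mul] at h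
  exact h

lemma c141 : (X.c 1 4 1 : ℤ) = 0 := by
  have h1 := X.cyc 4 1 1
  rw [X.c114, mul_zero] at h1
  have h411 : (X.c 4 1 1 : ℤ) = 0 := X.cancel_n h1
  have h := X.cyc 1 4 1
  rw [h411, mul_zero] at h
  exact X.cancel_n h

lemma c142 : (X.c 1 4 2 : ℤ) = 0 := by
  have h1 := X.cyc 4 2 1
  rw [show (X.c 2 1 4 : ℤ) = (X.c 1 2 4 : ℤ) from X.commz 2 1 4, X.c124, mul_zero] at h1
  have h421 : (X.c 4 2 1 : ℤ) = 0 := X.cancel_n h1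
  have h := X.cyc 1 4 2
  rw [h421, mul_zero] at h
  exact X.cancel_n h

lemma c230 : (X.c 2 3 0 : ℤ) = 0 := by
  have h := X.cyc 2 3 0
  rw [X.c_id_right' (show (3:Fin 5) ≠ 2 by decide), X.n0_one, mul_zero, one_mul] at h
  exact h

lemma c231 : (X.c 2 3 1 : ℤ) = 0 := by
  have h1 := X.cyc 3 1 2
  rw [X.c123, mul_zero] at h1
  have h312 : (X.c 3 1 2 : ℤ) = 0 := X.cancel_n h1
  have h := X.cyc 2 3 1
  rw [h312, mul_zero] at h
  exact X.cancel_n h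

lemma c232 : (X.c 2 3 2 : ℤ) = 0 := by
  have h1 := X.cyc 3 2 2
  rw [X.c223, mul_zero] at h1
  have h322 : (X.c 3 2 2 : ℤ) = 0 := X.cancel_n h1
  have h := X.cyc 2 3 2
  rw [h322, mul_zero] at h
  exact X.cancel_n h

lemma c240 : (X.c 2 4 0 : ℤ) = 0 := by
  have h := X.cyc 2 4 0
  rw [X.c_id_right' (show (4:Fin 5) ≠ 2 by decide), X.n0_one, mul_zero, one_mul] at h
  exact h

lemma c241 : (X.c 2 4 1 : ℤ) = 0 := by
  have h1 := X.cyc 4 1 2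
  rw [X.c124, mul_zero] at h1
  have h412 : (X.c 4 1 2 : ℤ) = 0 := X.cancel_n h1
  have h := X.cyc 2 4 1
  rw [h412, mul_zero] at h
  exact X.cancel_n h

lemma c242 : (X.c 2 4 2 : ℤ) = 0 := by
  have h1 := X.cyc 4 2 2
  rw [X.c224, mul_zero] at h1
  have h422 : (X.c 4 2 2 : ℤ) = 0 := X.cancel_n h1
  have h := X.cyc 2 4 2
  rw [h422, mul_zero] at h
  exact X.cancel_n h

/-- row sum for (1,3): `c133*n3 + c134*n4 = n1*n3` -/
lemma RS13 : (X.c 1 3 3 : ℤ) * (X.n 3 : ℤ) + (X.c 1 3 4 : ℤ) * (X.n 4 : ℤ)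
    = (X.n 1 : ℤ) * (X.n 3 : ℤ) := by
  have h := X.sum_c 1 3
  rw [Fin.sum_univ_five, X.c130, X.c131, X.c132] at h
  linarith

lemma RS14 : (X.c 1 4 3 : ℤ) * (X.n 3 : ℤ) + (X.c 1 4 4 : ℤ) * (X.n 4 : ℤ)
    = (X.n 1 : ℤ) * (X.n 4 : ℤ) := by
  have h := X.sum_c 1 4
  rw [Fin.sum_univ_five, X.c140, X.c141, X.c142] at h
  linarith

lemma RS23 : (X.c 2 3 3 : ℤ) * (X.n 3 : ℤ) + (X.c 2 3 4 : ℤ) * (X.n 4 : ℤ)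
    = (X.n 2 : ℤ) * (X.n 3 : ℤ) := by
  have h := X.sum_c 2 3
  rw [Fin.sum_univ_five, X.c230, X.c231, X.c232] at h
  linarith

lemma RS24 : (X.c 2 4 3 : ℤ) * (X.n 3 : ℤ) + (X.c 2 4 4 : ℤ) * (X.n 4 : ℤ)
    = (X.n 2 : ℤ) * (X.n 4 : ℤ) := by
  have h := X.sum_c 2 4
  rw [Fin.sum_univ_five, X.c240, X.c241, X.c242] at h
  linarith

lemma RS33 : (X.n 3 : ℤ) + (X.c 3 3 1 : ℤ) * (X.n 1 : ℤ) + (X.c 3 3 2 : ℤ) * (X.n 2 : ℤ)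
    + (X.c 3 3 3 : ℤ) * (X.n 3 : ℤ) + (X.c 3 3 4 : ℤ) * (X.n 4 : ℤ)
    = (X.n 3 : ℤ) * (X.n 3 : ℤ) := by
  have h := X.sum_c 3 3
  rw [Fin.sum_univ_five, X.c_id_right1 3, X.n0_one] at h
  linarith

lemma RS44 : (X.n 4 : ℤ) + (X.c 4 4 1 : ℤ) * (X.n 1 : ℤ) + (X.c 4 4 2 : ℤ) * (X.n 2 : ℤ)
    + (X.c 4 4 3 : ℤ) * (X.n 3 : ℤ) + (X.c 4 4 4 : ℤ) * (X.n 4 : ℤ)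
    = (X.n 4 : ℤ) * (X.n 4 : ℤ) := by
  have h := X.sum_c 4 4
  rw [Fin.sum_univ_five, X.c_id_right1 4, X.n0_one] at h
  linarith

lemma c134_pos : (X.c 1 3 4 : ℤ) ≠ 0 := by
  intro hz
  have hc133 : (X.c 1 3 3 : ℤ) = (X.n 1 : ℤ) := by
    have h := X.RS13
    rw [hz, zero_mul, add_zero] at h
    have h3 := X.nz_pos 3
    have : ((X.c 1 3 3 : ℤ) - (X.n 1 : ℤ)) * (X.n 3 : ℤ) = 0 := by linear_combination h
    rcases mul_eq_zero.mp this with h' | h'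
    · linarith
    · linarith
  have hr := X.radical 3 (by decide) {1} ⟨1, Finset.mem_singleton_self 1⟩ (by decide)
  apply hr
  rw [Finset.sum_singleton, Finset.sum_singleton]
  constructor
  · have h0 := X.N0_sq
    rw [X.M_zero] at h0
    have hcast : ((1 + X.c 1 1 0 : ℕ) : ℤ) = 1 + (X.c 1 1 0 : ℤ) := by push_cast; ring
    rw [h0, hcast]
  · rw [add_mul, one_mul, X.mul_M 1 3, Fin.sum_univ_five, X.c130, X.c131, X.c132, hz, hc133]
    simp only [zero_smul, add_zero, zero_add]
    rw [add_smul, one_smul]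
    rfl

lemma T13 : (X.c 1 3 3 : ℤ) + (X.c 1 4 4 : ℤ) = (X.n 1 : ℤ) - 1 := by
  have h := X.assoc_c 1 1 3 4
  rw [Fin.sum_univ_five, Fin.sum_univ_five,
    X.c_id_left' (show (3:Fin 5) ≠ 4 by decide), X.c111, X.c112, X.c113, X.c114,
    X.c130, X.c131, X.c132] at h
  have key : (X.c 1 3 4 : ℤ) * ((X.c 1 3 3 : ℤ) + (X.c 1 4 4 : ℤ))
      = (X.c 1 3 4 : ℤ) * ((X.n 1 : ℤ) - 1) := by linear_combination -h
  exact mul_left_cancel₀ X.c134_pos key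

lemma cyc134 : (X.n 4 : ℤ) * (X.c 1 3 4 : ℤ) = (X.n 3 : ℤ) * (X.c 1 4 3 : ℤ) := by
  have h1 := X.cyc 1 3 4
  have h2 := X.cyc 1 4 3
  rw [show (X.c 4 3 1 : ℤ) = (X.c 3 4 1 : ℤ) from X.commz 4 3 1] at h2
  linarith

lemma AB : (X.c 1 3 4 : ℤ) = (X.c 1 3 3 : ℤ) + 1 := by
  have h := X.RS14
  have h2 := X.cyc134
  have h4 := X.nz_pos 4
  -- c134*n4 + c144*n4 = n1*n4
  have key : ((X.c 1 3 4 : ℤ) + (X.c 1 4 4 : ℤ)) * (X.n 4 : ℤ)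
      = (X.n 1 : ℤ) * (X.n 4 : ℤ) := by linear_combination h + h2
  have h5 : (X.c 1 3 4 : ℤ) + (X.c 1 4 4 : ℤ) = (X.n 1 : ℤ) := by
    exact mul_right_cancel₀ (ne_of_gt h4) key
  have := X.T13
  linarith

lemma C144 : (X.c 1 4 4 : ℤ) = (X.n 1 : ℤ) - 1 - (X.c 1 3 3 : ℤ) := by
  have := X.T13
  linarith

lemma P1 : (X.c 1 3 3 : ℤ) * ((X.n 3 : ℤ) + (X.n 4 : ℤ))
    = (X.n 1 : ℤ) * (X.n 3 : ℤ) - (X.n 4 : ℤ) := by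
  linear_combination X.RS13 - (X.n 4 : ℤ) * X.AB

lemma c133_succ_pos : (X.c 1 3 3 : ℤ) + 1 ≠ 0 := by
  have : (0:ℤ) ≤ (X.c 1 3 3 : ℤ) := Int.natCast_nonneg _
  intro h
  linarith

lemma C234 : (X.c 2 3 4 : ℤ) = (X.c 2 3 3 : ℤ) := by
  have h := X.assoc_c 1 2 3 4
  rw [Fin.sum_univ_five, Fin.sum_univ_five,
    X.c120, X.c121, X.c122, X.c123, X.c124,
    X.c230, X.c231, X.c232, X.AB, X.C144] at h
  have key : ((X.c 1 3 3 : ℤ) + 1) * (X.c 2 3 4 : ℤ)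
      = ((X.c 1 3 3 : ℤ) + 1) * (X.c 2 3 3 : ℤ) := by linear_combination h
  exact mul_left_cancel₀ X.c133_succ_pos key

lemma C244 : (X.c 2 4 4 : ℤ) = (X.c 2 4 3 : ℤ) := by
  have h := X.assoc_c 1 2 4 4
  rw [Fin.sum_univ_five, Fin.sum_univ_five,
    X.c120, X.c121, X.c122, X.c123, X.c124,
    X.c240, X.c241, X.c242, X.AB, X.C144] at h
  have key : ((X.c 1 3 3 : ℤ) + 1) * (X.c 2 4 4 : ℤ)
      = ((X.c 1 3 3 : ℤ) + 1) * (X.c 2 4 3 : ℤ) := by linear_combination h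
  exact mul_left_cancel₀ X.c133_succ_pos key

lemma P2 : (X.c 2 3 3 : ℤ) * ((X.n 3 : ℤ) + (X.n 4 : ℤ)) = (X.n 2 : ℤ) * (X.n 3 : ℤ) := by
  linear_combination X.RS23 - (X.n 4 : ℤ) * X.C234

lemma P3 : (X.c 2 4 3 : ℤ) * ((X.n 3 : ℤ) + (X.n 4 : ℤ)) = (X.n 2 : ℤ) * (X.n 4 : ℤ) := by
  linear_combination X.RS24 - (X.n 4 : ℤ) * X.C244

lemma f_ne : (X.c 2 3 3 : ℤ) ≠ 0 := by
  intro h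
  have := X.P2
  rw [h, zero_mul] at this
  have h2 := X.nz_pos 2
  have h3 := X.nz_pos 3
  nlinarith

lemma g_ne : (X.c 2 4 3 : ℤ) ≠ 0 := by
  intro h
  have := X.P3
  rw [h, zero_mul] at this
  have h2 := X.nz_pos 2
  have h4 := X.nz_pos 4
  nlinarith

lemma c331cyc : (X.n 1 : ℤ) * (X.c 3 3 1 : ℤ) = (X.n 3 : ℤ) * (X.c 1 3 3 : ℤ) := by
  have h := X.cyc 3 3 1
  rw [show (X.c 3 1 3 : ℤ) = (X.c 1 3 3 : ℤ) from X.commz 3 1 3] at h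
  exact h

lemma c332cyc : (X.n 2 : ℤ) * (X.c 3 3 2 : ℤ) = (X.n 3 : ℤ) * (X.c 2 3 3 : ℤ) := by
  have h := X.cyc 3 3 2
  rw [show (X.c 3 2 3 : ℤ) = (X.c 2 3 3 : ℤ) from X.commz 3 2 3] at h
  exact h

lemma c441cyc : (X.n 1 : ℤ) * (X.c 4 4 1 : ℤ) = (X.n 4 : ℤ) * (X.c 1 4 4 : ℤ) := by
  have h := X.cyc 4 4 1
  rw [show (X.c 4 1 4 : ℤ) = (X.c 1 4 4 : ℤ) from X.commz 4 1 4] at h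
  exact h

lemma c442cyc : (X.n 2 : ℤ) * (X.c 4 4 2 : ℤ) = (X.n 4 : ℤ) * (X.c 2 4 3 : ℤ) := by
  have h := X.cyc 4 4 2
  rw [show (X.c 4 2 4 : ℤ) = (X.c 2 4 4 : ℤ) from X.commz 4 2 4, X.C244] at h
  exact h

lemma T6 : (X.c 3 3 4 : ℤ) + (X.c 3 4 4 : ℤ) = (X.c 3 3 3 : ℤ) + (X.c 3 4 3 : ℤ) := by
  have hA := X.assoc_c 2 3 3 4
  rw [Fin.sum_univ_five, Fin.sum_univ_five,
    X.c230, X.c231, X.c232,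
    show (X.c 4 3 4 : ℤ) = (X.c 3 4 4 : ℤ) from X.commz 4 3 4,
    X.c_id_right' (show (2:Fin 5) ≠ 4 by decide),
    show (X.c 2 1 4 : ℤ) = (X.c 1 2 4 : ℤ) from X.commz 2 1 4, X.c124,
    X.c224, X.C234, X.C244] at hA
  have hB := X.assoc_c 2 3 3 3
  rw [Fin.sum_univ_five, Fin.sum_univ_five,
    X.c230, X.c231, X.c232,
    show (X.c 4 3 3 : ℤ) = (X.c 3 4 3 : ℤ) from X.commz 4 3 3,
    X.c_id_right' (show (2:Fin 5) ≠ 3 by decide),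
    show (X.c 2 1 3 : ℤ) = (X.c 1 2 3 : ℤ) from X.commz 2 1 3, X.c123,
    X.c223, X.C234] at hB
  have key : (X.c 2 3 3 : ℤ) * ((X.c 3 3 4 : ℤ) + (X.c 3 4 4 : ℤ))
      = (X.c 2 3 3 : ℤ) * ((X.c 3 3 3 : ℤ) + (X.c 3 4 3 : ℤ)) := by
    linear_combination hA - hB
  exact mul_left_cancel₀ X.f_ne key

lemma T7 : (X.c 3 4 3 : ℤ) + (X.c 4 4 3 : ℤ) = (X.c 3 4 4 : ℤ) + (X.c 4 4 4 : ℤ) := by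
  have hC := X.assoc_c 2 4 4 3
  rw [Fin.sum_univ_five, Fin.sum_univ_five,
    X.c240, X.c241, X.c242,
    X.c_id_right' (show (2:Fin 5) ≠ 3 by decide),
    show (X.c 2 1 3 : ℤ) = (X.c 1 2 3 : ℤ) from X.commz 2 1 3, X.c123,
    X.c223, X.C244] at hC
  have hD := X.assoc_c 2 4 4 4
  rw [Fin.sum_univ_five, Fin.sum_univ_five,
    X.c240, X.c241, X.c242,
    X.c_id_right' (show (2:Fin 5) ≠ 4 by decide),
    show (X.c 2 1 4 : ℤ) = (X.c 1 2 4 : ℤ) from X.commz 2 1 4, X.c124,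
    X.c224, X.C244, X.C234] at hD
  have key : (X.c 2 4 3 : ℤ) * ((X.c 3 4 3 : ℤ) + (X.c 4 4 3 : ℤ))
      = (X.c 2 4 3 : ℤ) * ((X.c 3 4 4 : ℤ) + (X.c 4 4 4 : ℤ)) := by
    linear_combination hC - hD
  exact mul_left_cancel₀ X.g_ne key

lemma s2lem : (X.c 3 3 2 : ℤ) * ((X.n 3 : ℤ) + (X.n 4 : ℤ)) = (X.n 3 : ℤ) * (X.n 3 : ℤ) := by
  have key : (X.n 2 : ℤ) * ((X.c 3 3 2 : ℤ) * ((X.n 3 : ℤ) + (X.n 4 : ℤ)))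
      = (X.n 2 : ℤ) * ((X.n 3 : ℤ) * (X.n 3 : ℤ)) := by
    linear_combination ((X.n 3 : ℤ) + (X.n 4 : ℤ)) * X.c332cyc + (X.n 3 : ℤ) * X.P2
  exact mul_left_cancel₀ (ne_of_gt (X.nz_pos 2)) key

lemma s2lem' : (X.c 4 4 2 : ℤ) * ((X.n 3 : ℤ) + (X.n 4 : ℤ)) = (X.n 4 : ℤ) * (X.n 4 : ℤ) := by
  have key : (X.n 2 : ℤ) * ((X.c 4 4 2 : ℤ) * ((X.n 3 : ℤ) + (X.n 4 : ℤ)))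
      = (X.n 2 : ℤ) * ((X.n 4 : ℤ) * (X.n 4 : ℤ)) := by
    linear_combination ((X.n 3 : ℤ) + (X.n 4 : ℤ)) * X.c442cyc + (X.n 4 : ℤ) * X.P3
  exact mul_left_cancel₀ (ne_of_gt (X.nz_pos 2)) key

lemma F6lem : (X.n 1 : ℤ) * (X.c 4 4 1 : ℤ)
    = (X.n 4 : ℤ) * ((X.n 1 : ℤ) - 1 - (X.c 1 3 3 : ℤ)) := by
  rw [X.c441cyc, X.C144]

lemma D_pos : (0:ℤ) < (X.n 3 : ℤ) + (X.n 4 : ℤ) := by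
  have := X.nz_pos 3; have := X.nz_pos 4; linarith

lemma n1D_ne : (X.n 1 : ℤ) * ((X.n 3 : ℤ) + (X.n 4 : ℤ)) ≠ 0 :=
  ne_of_gt (mul_pos (X.nz_pos 1) X.D_pos)

lemma D2_ne : ((X.n 3 : ℤ) + (X.n 4 : ℤ)) * ((X.n 3 : ℤ) + (X.n 4 : ℤ)) ≠ 0 :=
  ne_of_gt (mul_pos X.D_pos X.D_pos)

/-- `cc 1 = cc 2` criterion, case `i = 3`. -/
lemma left12_3 : (X.c 2 2 1 + 2 * X.c 2 3 1 + X.c 3 3 1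
      = X.c 2 2 2 + 2 * X.c 2 3 2 + X.c 3 3 2) ↔
    ((X.n 3 : ℤ) * (X.n 4 : ℤ)
      = (X.n 1 : ℤ) * ((X.n 1 : ℤ) + 1) * ((X.n 3 : ℤ) + (X.n 4 : ℤ))) := by
  constructor
  · intro h
    have e : (X.n 2 : ℤ) + (X.c 3 3 1 : ℤ)
        = ((X.n 2 : ℤ) - (X.n 1 : ℤ) - 1) + (X.c 3 3 2 : ℤ) := by
      zify at h
      rw [X.c221, X.c231, X.c232, X.c222] at h
      linarith
    linear_combination (-((X.n 1 : ℤ) * ((X.n 3 : ℤ) + (X.n 4 : ℤ)))) * e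
      + ((X.n 3 : ℤ) + (X.n 4 : ℤ)) * X.c331cyc + (X.n 3 : ℤ) * X.P1
      - (X.n 1 : ℤ) * X.s2lem
  · intro h
    have key : ((X.n 1 : ℤ) * ((X.n 3 : ℤ) + (X.n 4 : ℤ))) * ((X.n 2 : ℤ) + (X.c 3 3 1 : ℤ))
        = ((X.n 1 : ℤ) * ((X.n 3 : ℤ) + (X.n 4 : ℤ)))
          * (((X.n 2 : ℤ) - (X.n 1 : ℤ) - 1) + (X.c 3 3 2 : ℤ)) := by
      linear_combination (-1 : ℤ) * h + ((X.n 3 : ℤ) + (X.n 4 : ℤ)) * X.c331cyc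
        + (X.n 3 : ℤ) * X.P1 - (X.n 1 : ℤ) * X.s2lem
    have e := mul_left_cancel₀ X.n1D_ne key
    zify
    rw [X.c221, X.c231, X.c232, X.c222]
    linarith

/-- `cc 1 = cc 2` criterion, case `i = 4`. -/
lemma left12_4 : (X.c 2 2 1 + 2 * X.c 2 4 1 + X.c 4 4 1
      = X.c 2 2 2 + 2 * X.c 2 4 2 + X.c 4 4 2) ↔
    ((X.n 3 : ℤ) * (X.n 4 : ℤ)
      = (X.n 1 : ℤ) * ((X.n 1 : ℤ) + 1) * ((X.n 3 : ℤ) + (X.n 4 : ℤ))) := by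
  constructor
  · intro h
    have e : (X.n 2 : ℤ) + (X.c 4 4 1 : ℤ)
        = ((X.n 2 : ℤ) - (X.n 1 : ℤ) - 1) + (X.c 4 4 2 : ℤ) := by
      zify at h
      rw [X.c221, X.c241, X.c242, X.c222] at h
      linarith
    linear_combination (-((X.n 1 : ℤ) * ((X.n 3 : ℤ) + (X.n 4 : ℤ)))) * e
      + ((X.n 3 : ℤ) + (X.n 4 : ℤ)) * X.F6lem - (X.n 4 : ℤ) * X.P1
      - (X.n 1 : ℤ) * X.s2lem'
  · intro h
    have key : ((X.n 1 : ℤ) * ((X.n 3 : ℤ) + (X.n 4 : ℤ))) * ((X.n 2 : ℤ) + (X.c 4 4 1 : ℤ))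
        = ((X.n 1 : ℤ) * ((X.n 3 : ℤ) + (X.n 4 : ℤ)))
          * (((X.n 2 : ℤ) - (X.n 1 : ℤ) - 1) + (X.c 4 4 2 : ℤ)) := by
      linear_combination (-1 : ℤ) * h + ((X.n 3 : ℤ) + (X.n 4 : ℤ)) * X.F6lem
        - (X.n 4 : ℤ) * X.P1 - (X.n 1 : ℤ) * X.s2lem'
    have e := mul_left_cancel₀ X.n1D_ne key
    zify
    rw [X.c221, X.c241, X.c242, X.c222]
    linarith

/-- `cc 3 = cc 4` criterion, case `i = 3`. -/
lemma left34_3 : (X.c 2 2 3 + 2 * X.c 2 3 3 + X.c 3 3 3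
      = X.c 2 2 4 + 2 * X.c 2 3 4 + X.c 3 3 4) ↔ X.c 3 3 3 = X.c 3 3 4 := by
  have h1 := X.c223
  have h2 := X.c224
  have h3 := X.C234
  constructor <;> intro h <;> zify at h ⊢ <;> linarith

/-- `cc 3 = cc 4` criterion, case `i = 4`. -/
lemma left34_4 : (X.c 2 2 3 + 2 * X.c 2 4 3 + X.c 4 4 3
      = X.c 2 2 4 + 2 * X.c 2 4 4 + X.c 4 4 4) ↔ X.c 3 3 3 = X.c 3 3 4 := by
  have h1 := X.c223
  have h2 := X.c224
  have h3 := X.C244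
  have h6 := X.T6
  have h7 := X.T7
  constructor <;> intro h <;> zify at h ⊢ <;> linarith

/-- `cc 2 = cc 3` criterion given `c 3 3 3 = c 3 3 4`, case `i = 3`. -/
lemma left23_3 (hpq : X.c 3 3 3 = X.c 3 3 4) :
    (X.c 2 2 2 + 2 * X.c 2 3 2 + X.c 3 3 2 = X.c 2 2 3 + 2 * X.c 2 3 3 + X.c 3 3 3) ↔
    ((X.n 2 : ℤ) * (X.n 4 : ℤ)
      = ((X.n 1 : ℤ) + 1) * ((X.n 4 : ℤ) + 2 * (X.n 3 : ℤ))) := by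
  have hpqz : (X.c 3 3 3 : ℤ) = (X.c 3 3 4 : ℤ) := by exact_mod_cast hpq
  have s1 : (X.c 3 3 3 : ℤ) * ((X.n 3 : ℤ) + (X.n 4 : ℤ))
      = (X.n 3 : ℤ) * (X.n 3 : ℤ) - (X.n 3 : ℤ) - (X.n 3 : ℤ) * (X.c 1 3 3 : ℤ)
        - (X.n 3 : ℤ) * (X.c 2 3 3 : ℤ) := by
    linear_combination X.RS33 - X.c331cyc - X.c332cyc + (X.n 4 : ℤ) * hpqz
  constructor
  · intro h
    have e : ((X.n 2 : ℤ) - (X.n 1 : ℤ) - 1) + (X.c 3 3 2 : ℤ)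
        = 2 * (X.c 2 3 3 : ℤ) + (X.c 3 3 3 : ℤ) := by
      zify at h
      rw [X.c222, X.c232, X.c223] at h
      linarith
    have key : (X.n 4 : ℤ) * ((X.n 2 : ℤ) * (X.n 4 : ℤ))
        = (X.n 4 : ℤ) * (((X.n 1 : ℤ) + 1) * ((X.n 4 : ℤ) + 2 * (X.n 3 : ℤ))) := by
      linear_combination (((X.n 3 : ℤ) + (X.n 4 : ℤ))^2) * e
        - ((X.n 3 : ℤ) + (X.n 4 : ℤ)) * X.s2lem
        + ((X.n 3 : ℤ) + (X.n 4 : ℤ)) * s1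
        + (2 * ((X.n 3 : ℤ) + (X.n 4 : ℤ)) - (X.n 3 : ℤ)) * X.P2
        - (X.n 3 : ℤ) * X.P1
    exact mul_left_cancel₀ (ne_of_gt (X.nz_pos 4)) key
  · intro h
    have key : (((X.n 3 : ℤ) + (X.n 4 : ℤ)) * ((X.n 3 : ℤ) + (X.n 4 : ℤ)))
          * (((X.n 2 : ℤ) - (X.n 1 : ℤ) - 1) + (X.c 3 3 2 : ℤ))
        = (((X.n 3 : ℤ) + (X.n 4 : ℤ)) * ((X.n 3 : ℤ) + (X.n 4 : ℤ)))
          * (2 * (X.c 2 3 3 : ℤ) + (X.c 3 3 3 : ℤ)) := by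
      linear_combination (X.n 4 : ℤ) * h + ((X.n 3 : ℤ) + (X.n 4 : ℤ)) * X.s2lem
        - ((X.n 3 : ℤ) + (X.n 4 : ℤ)) * s1
        - (2 * ((X.n 3 : ℤ) + (X.n 4 : ℤ)) - (X.n 3 : ℤ)) * X.P2
        + (X.n 3 : ℤ) * X.P1
    have e := mul_left_cancel₀ X.D2_ne key
    zify
    rw [X.c222, X.c232, X.c223]
    linarith

/-- `cc 2 = cc 3` criterion given `c 3 3 3 = c 3 3 4`, case `i = 4`. -/
lemma left23_4 (hpq : X.c 3 3 3 = X.c 3 3 4) :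
    (X.c 2 2 2 + 2 * X.c 2 4 2 + X.c 4 4 2 = X.c 2 2 3 + 2 * X.c 2 4 3 + X.c 4 4 3) ↔
    ((X.n 2 : ℤ) * (X.n 3 : ℤ)
      = ((X.n 1 : ℤ) + 1) * ((X.n 3 : ℤ) + 2 * (X.n 4 : ℤ))) := by
  have hpqz : (X.c 3 3 3 : ℤ) = (X.c 3 3 4 : ℤ) := by exact_mod_cast hpq
  have huw : (X.c 4 4 3 : ℤ) = (X.c 4 4 4 : ℤ) := by
    have h6 := X.T6; have h7 := X.T7; linarith
  have s1 : (X.c 4 4 3 : ℤ) * ((X.n 3 : ℤ) + (X.n 4 : ℤ))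
      = (X.n 4 : ℤ) * (X.n 4 : ℤ) - (X.n 4 : ℤ)
        - (X.n 4 : ℤ) * ((X.n 1 : ℤ) - 1 - (X.c 1 3 3 : ℤ))
        - (X.n 4 : ℤ) * (X.c 2 4 3 : ℤ) := by
    linear_combination X.RS44 - X.F6lem - X.c442cyc + (X.n 4 : ℤ) * huw
  constructor
  · intro h
    have e : ((X.n 2 : ℤ) - (X.n 1 : ℤ) - 1) + (X.c 4 4 2 : ℤ)
        = 2 * (X.c 2 4 3 : ℤ) + (X.c 4 4 3 : ℤ) := by
      zify at h
      rw [X.c222, X.c242, X.c223] at h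
      linarith
    have key : (X.n 3 : ℤ) * ((X.n 2 : ℤ) * (X.n 3 : ℤ))
        = (X.n 3 : ℤ) * (((X.n 1 : ℤ) + 1) * ((X.n 3 : ℤ) + 2 * (X.n 4 : ℤ))) := by
      linear_combination (((X.n 3 : ℤ) + (X.n 4 : ℤ))^2) * e
        - ((X.n 3 : ℤ) + (X.n 4 : ℤ)) * X.s2lem'
        + ((X.n 3 : ℤ) + (X.n 4 : ℤ)) * s1
        + (2 * ((X.n 3 : ℤ) + (X.n 4 : ℤ)) - (X.n 4 : ℤ)) * X.P3
        + (X.n 4 : ℤ) * X.P1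
    exact mul_left_cancel₀ (ne_of_gt (X.nz_pos 3)) key
  · intro h
    have key : (((X.n 3 : ℤ) + (X.n 4 : ℤ)) * ((X.n 3 : ℤ) + (X.n 4 : ℤ)))
          * (((X.n 2 : ℤ) - (X.n 1 : ℤ) - 1) + (X.c 4 4 2 : ℤ))
        = (((X.n 3 : ℤ) + (X.n 4 : ℤ)) * ((X.n 3 : ℤ) + (X.n 4 : ℤ)))
          * (2 * (X.c 2 4 3 : ℤ) + (X.c 4 4 3 : ℤ)) := by
      linear_combination (X.n 3 : ℤ) * h + ((X.n 3 : ℤ) + (X.n 4 : ℤ)) * X.s2lem'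
        - ((X.n 3 : ℤ) + (X.n 4 : ℤ)) * s1
        - (2 * ((X.n 3 : ℤ) + (X.n 4 : ℤ)) - (X.n 4 : ℤ)) * X.P3
        - (X.n 4 : ℤ) * X.P1
    have e := mul_left_cancel₀ X.D2_ne key
    zify
    rw [X.c222, X.c242, X.c223]
    linarith

lemma nq_pos (i : Fin 5) : (0:ℚ) < (X.n i : ℚ) := by
  have := X.n_pos i
  exact_mod_cast Nat.pos_of_ne_zero (by omega)

lemma eq1_iff : (1 / (X.n 3 : ℚ) + 1 / (X.n 4 : ℚ)
      = 1 / (X.n 1 : ℚ) - 1 / ((X.n 1 : ℚ) + 1)) ↔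
    ((X.n 3 : ℤ) * (X.n 4 : ℤ)
      = (X.n 1 : ℤ) * ((X.n 1 : ℤ) + 1) * ((X.n 3 : ℤ) + (X.n 4 : ℤ))) := by
  have h1 := X.nq_pos 1
  have h3 := X.nq_pos 3
  have h4 := X.nq_pos 4
  have h11 : (0:ℚ) < (X.n 1 : ℚ) + 1 := by linarith
  rw [div_add_div _ _ (ne_of_gt h3) (ne_of_gt h4),
    div_sub_div _ _ (ne_of_gt h1) (ne_of_gt h11),
    div_eq_div_iff (by positivity) (by positivity)]
  constructor
  · intro h
    have hq : (X.n 3 : ℚ) * (X.n 4 : ℚ)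
        = (X.n 1 : ℚ) * ((X.n 1 : ℚ) + 1) * ((X.n 3 : ℚ) + (X.n 4 : ℚ)) := by
      linear_combination -h
    exact_mod_cast hq
  · intro h
    have hq : (X.n 3 : ℚ) * (X.n 4 : ℚ)
        = (X.n 1 : ℚ) * ((X.n 1 : ℚ) + 1) * ((X.n 3 : ℚ) + (X.n 4 : ℚ)) := by
      exact_mod_cast h
    linear_combination -hq

lemma eq2_iff3 : ((X.n 2 : ℚ) / ((X.n 1 : ℚ) + 1) - 2 * (X.n 3 : ℚ) / (X.n 4 : ℚ) = 1) ↔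
    ((X.n 2 : ℤ) * (X.n 4 : ℤ)
      = ((X.n 1 : ℤ) + 1) * ((X.n 4 : ℤ) + 2 * (X.n 3 : ℤ))) := by
  have h4 := X.nq_pos 4
  have h11 : (0:ℚ) < (X.n 1 : ℚ) + 1 := by linarith [X.nq_pos 1]
  rw [div_sub_div _ _ (ne_of_gt h11) (ne_of_gt h4),
    div_eq_one_iff_eq (by positivity)]
  constructor
  · intro h
    have hq : (X.n 2 : ℚ) * (X.n 4 : ℚ)
        = ((X.n 1 : ℚ) + 1) * ((X.n 4 : ℚ) + 2 * (X.n 3 : ℚ)) := by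
      linear_combination h
    exact_mod_cast hq
  · intro h
    have hq : (X.n 2 : ℚ) * (X.n 4 : ℚ)
        = ((X.n 1 : ℚ) + 1) * ((X.n 4 : ℚ) + 2 * (X.n 3 : ℚ)) := by
      exact_mod_cast h
    linear_combination hq

lemma eq2_iff4 : ((X.n 2 : ℚ) / ((X.n 1 : ℚ) + 1) - 2 * (X.n 4 : ℚ) / (X.n 3 : ℚ) = 1) ↔
    ((X.n 2 : ℤ) * (X.n 3 : ℤ)
      = ((X.n 1 : ℤ) + 1) * ((X.n 3 : ℤ) + 2 * (X.n 4 : ℤ))) := by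
  have h3 := X.nq_pos 3
  have h11 : (0:ℚ) < (X.n 1 : ℚ) + 1 := by linarith [X.nq_pos 1]
  rw [div_sub_div _ _ (ne_of_gt h11) (ne_of_gt h3),
    div_eq_one_iff_eq (by positivity)]
  constructor
  · intro h
    have hq : (X.n 2 : ℚ) * (X.n 3 : ℚ)
        = ((X.n 1 : ℚ) + 1) * ((X.n 3 : ℚ) + 2 * (X.n 4 : ℚ)) := by
      linear_combination h
    exact_mod_cast hq
  · intro h
    have hq : (X.n 2 : ℚ) * (X.n 3 : ℚ)
        = ((X.n 1 : ℚ) + 1) * ((X.n 3 : ℚ) + 2 * (X.n 4 : ℚ)) := by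
      exact_mod_cast h
    linear_combination hq

end HigmanianConfig

/-- for `i ∈ {3,4}` and `c_j = c(2,2,j) + 2c(2,i,j) + c(i,i,j)`:
(a) `c_1 = c_2 ∧ c_3 = c_4` iff `c(3,3,3) = c(3,3,4)` and Eq. (1);
(b) `c_2 = c_3 ∧ c_3 = c_4` iff `c(3,3,3) = c(3,3,4)` and Eq. (2). -/
theorem higmanian_common_neighbours_criterion {V : Type*} [Fintype V] [DecidableEq V]
    (X : HigmanianConfig V) (i j : Fin 5)
    (hij : (i = 3 ∧ j = 4) ∨ (i = 4 ∧ j = 3))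
    (cc : Fin 5 → ℕ)
    (hcc : ∀ k : Fin 5, cc k = X.c 2 2 k + 2 * X.c 2 i k + X.c i i k) :
    ((cc 1 = cc 2 ∧ cc 3 = cc 4) ↔
      (X.c 3 3 3 = X.c 3 3 4 ∧
        1 / (X.n 3 : ℚ) + 1 / (X.n 4 : ℚ)
          = 1 / (X.n 1 : ℚ) - 1 / ((X.n 1 : ℚ) + 1))) ∧
    ((cc 2 = cc 3 ∧ cc 3 = cc 4) ↔
      (X.c 3 3 3 = X.c 3 3 4 ∧
        (X.n 2 : ℚ) / ((X.n 1 : ℚ) + 1) - 2 * (X.n i : ℚ) / (X.n j : ℚ) = 1)) := by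
  rcases hij with ⟨hi, hj⟩ | ⟨hi, hj⟩ <;> subst hi <;> subst hj
  · constructor
    · rw [hcc 1, hcc 2, hcc 3, hcc 4]
      constructor
      · rintro ⟨h1, h2⟩
        exact ⟨X.left34_3.mp h2, X.eq1_iff.mpr (X.left12_3.mp h1)⟩
      · rintro ⟨h1, h2⟩
        exact ⟨X.left12_3.mpr (X.eq1_iff.mp h2), X.left34_3.mpr h1⟩
    · rw [hcc 2, hcc 3, hcc 4]
      constructor
      · rintro ⟨h1, h2⟩
        have hpq := X.left34_3.mp h2
        exact ⟨hpq, X.eq2_iff3.mpr ((X.left23_3 hpq).mp h1)⟩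
      · rintro ⟨hpq, h2⟩
        exact ⟨(X.left23_3 hpq).mpr (X.eq2_iff3.mp h2), X.left34_3.mpr hpq⟩
  · constructor
    · rw [hcc 1, hcc 2, hcc 3, hcc 4]
      constructor
      · rintro ⟨h1, h2⟩
        exact ⟨X.left34_4.mp h2, X.eq1_iff.mpr (X.left12_4.mp h1)⟩
      · rintro ⟨h1, h2⟩
        exact ⟨X.left12_4.mpr (X.eq1_iff.mp h2), X.left34_4.mpr h1⟩
    · rw [hcc 2, hcc 3, hcc 4]
      constructor
      · rintro ⟨h1, h2⟩
        have hpq := X.left34_4.mp h2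
        exact ⟨hpq, X.eq2_iff4.mpr ((X.left23_4 hpq).mp h1)⟩
      · rintro ⟨hpq, h2⟩
        exact ⟨(X.left23_4 hpq).mpr (X.eq2_iff4.mp h2), X.left34_4.mpr hpq⟩
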